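/- With the setup of the previous statement (f_i supported on [a_i, a_{i+1}], with m-fold iterated integrals over [a_i, a_{i+1}] equal to h^{r+m} V_m), for every x ∈ (a_{i+1}, b] and every k ≥ 1, the k-fold iterated integral ∫_a^x ∫_a^{y_{k-1}} ⋯ ∫_a^{y_1} f_i(y_0) dy_0 ⋯ dy_{k-1} equals Σ_{m=1}^k (h^{r+m}/(k-m)!) V_m (x - a_{i+1})^{k-m}. -/

import Mathlib

noncomputable def iterInt (f : ℝ → ℝ) (a : ℝ) : ℕ → ℝ → ℝ
  | 0 => f
  | m + 1 => fun x => ∫ y in a..x, iterInt f a m y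

lemma iterInt_continuous (f : ℝ → ℝ) (hf : Continuous f) (c : ℝ) :
    ∀ m, Continuous (iterInt f c m)
  | 0 => hf
  | (m + 1) => by
    have ih := iterInt_continuous f hf c m
    exact intervalIntegral.continuous_primitive (fun a b => ih.intervalIntegrable a b) c

lemma iterInt_zero_left (f : ℝ → ℝ) (c : ℝ) (h0 : ∀ y ≤ c, f y = 0) :
    ∀ m, ∀ y ≤ c, iterInt f c (m + 1) y = 0 := by
  intro m
  induction m with
  | zero =>
    intro y hy
    show (∫ t in c..y, f t) = 0
    rw [intervalIntegral.integral_congr (g := fun _ => (0 : ℝ))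
      (fun t ht => h0 t ((Set.uIcc_of_ge hy ▸ ht).2))]
    simp
  | succ m ih =>
    intro y hy
    show (∫ t in c..y, iterInt f c (m + 1) t) = 0
    rw [intervalIntegral.integral_congr (g := fun _ => (0 : ℝ))
      (fun t ht => ih t ((Set.uIcc_of_ge hy ▸ ht).2))]
    simp

lemma iterInt_shift (f : ℝ → ℝ) (hf : Continuous f) (a c : ℝ) (hac : a ≤ c)
    (h0 : ∀ y ≤ c, f y = 0) : ∀ m, iterInt f a m = iterInt f c m := by
  intro m
  induction m with
  | zero => rfl
  | succ m ih =>
    funext x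
    show (∫ t in a..x, iterInt f a m t) = ∫ t in c..x, iterInt f c m t
    rw [ih]
    have hcont := iterInt_continuous f hf c m
    have hsplit := intervalIntegral.integral_add_adjacent_intervals (μ := MeasureTheory.volume)
      (hcont.intervalIntegrable a c) (hcont.intervalIntegrable c x)
    have hzero : (∫ t in a..c, iterInt f c m t) = 0 := by
      have hz : ∀ t ∈ Set.uIcc a c, iterInt f c m t = 0 := by
        intro t ht
        have htc : t ≤ c := (Set.uIcc_of_le hac ▸ ht).2
        cases m with
        | zero => exact h0 t htc
        | succ m => exact iterInt_zero_left f c h0 m t htc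
      rw [intervalIntegral.integral_congr (g := fun _ => (0 : ℝ)) hz]
      simp
    rw [← hsplit, hzero, zero_add]

theorem stmt5 (a b : ℝ) (hab : a < b) (n k r i : ℕ) (hn : 1 ≤ n) (hk : 1 ≤ k) (hr : 1 ≤ r)
    (hi : i < n) (h ai ai1 : ℝ) (hh : h = (b - a) / n) (hai : ai = a + i * h)
    (hai1 : ai1 = a + (i + 1) * h) (f : ℝ → ℝ) (hf : Continuous f) (V : ℕ → ℝ)
    (hsupp : ∀ x, x ∉ Set.Icc ai ai1 → f x = 0)
    (hval : ∀ m, 1 ≤ m → iterInt f ai m ai1 = h ^ (r + m) * V m) :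
    ∀ x, ai1 < x → x ≤ b →
      iterInt f a k x
        = ∑ m ∈ Finset.Icc 1 k,
            h ^ (r + m) / ((k - m).factorial : ℝ) * V m * (x - ai1) ^ (k - m) := by
  have hpos : 0 < h := by
    rw [hh]
    have : (0 : ℝ) < n := by exact_mod_cast hn
    exact div_pos (by linarith) this
  have haai : a ≤ ai := by
    rw [hai]
    have : (0 : ℝ) ≤ i := by positivity
    nlinarith
  have haiai1 : ai ≤ ai1 := by rw [hai, hai1]; nlinarith
  -- f vanishes on Iic ai and on Ici ai1
  have hf0 : ∀ y ≤ ai, f y = 0 := by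
    have heq : Set.EqOn f (fun _ => (0 : ℝ)) (Set.Iio ai) := by
      intro y hy
      exact hsupp y (fun hmem => absurd hmem.1 (not_le.mpr hy))
    have hcl : Set.EqOn f (fun _ => (0 : ℝ)) (closure (Set.Iio ai)) :=
      heq.closure hf continuous_const
    rw [closure_Iio] at hcl
    exact fun y hy => hcl hy
  have hf1 : ∀ y, ai1 ≤ y → f y = 0 := by
    have heq : Set.EqOn f (fun _ => (0 : ℝ)) (Set.Ioi ai1) := by
      intro y hy
      exact hsupp y (fun hmem => absurd hmem.2 (not_le.mpr hy))
    have hcl : Set.EqOn f (fun _ => (0 : ℝ)) (closure (Set.Ioi ai1)) :=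
      heq.closure hf continuous_const
    rw [closure_Ioi] at hcl
    exact fun y hy => hcl hy
  have hcont : ∀ m, Continuous (iterInt f ai m) := iterInt_continuous f hf ai
  -- key claim on [ai1, ∞)
  have key : ∀ k, 1 ≤ k → ∀ x, ai1 ≤ x →
      iterInt f ai k x
        = ∑ m ∈ Finset.Icc 1 k,
            h ^ (r + m) / ((k - m).factorial : ℝ) * V m * (x - ai1) ^ (k - m) := by
    intro k hk
    induction k, hk using Nat.le_induction with
    | base =>
      intro x hx
      show (∫ t in ai..x, f t)
          = ∑ m ∈ Finset.Icc 1 1,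
            h ^ (r + m) / ((1 - m).factorial : ℝ) * V m * (x - ai1) ^ (1 - m)
      have hsplit := intervalIntegral.integral_add_adjacent_intervals (μ := MeasureTheory.volume)
        (hf.intervalIntegrable ai ai1) (hf.intervalIntegrable ai1 x)
      have hz : (∫ t in ai1..x, f t) = 0 := by
        rw [intervalIntegral.integral_congr (g := fun _ => (0 : ℝ))
          (fun t ht => hf1 t ((Set.uIcc_of_le hx ▸ ht).1))]
        simp
      have h1 : (∫ t in ai..ai1, f t) = h ^ (r + 1) * V 1 := hval 1 le_rfl
      rw [← hsplit, hz, add_zero, h1]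
      simp
    | succ k hk1 ih =>
      intro x hx
      show (∫ t in ai..x, iterInt f ai k t)
          = ∑ m ∈ Finset.Icc 1 (k + 1),
            h ^ (r + m) / ((k + 1 - m).factorial : ℝ) * V m * (x - ai1) ^ (k + 1 - m)
      have hsplit := intervalIntegral.integral_add_adjacent_intervals (μ := MeasureTheory.volume)
        ((hcont k).intervalIntegrable ai ai1) ((hcont k).intervalIntegrable ai1 x)
      have h1 : (∫ t in ai..ai1, iterInt f ai k t) = h ^ (r + (k + 1)) * V (k + 1) :=
        hval (k + 1) (by omega)
      have h2 : (∫ t in ai1..x, iterInt f ai k t)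
          = ∑ m ∈ Finset.Icc 1 k,
              h ^ (r + m) / ((k + 1 - m).factorial : ℝ) * V m * (x - ai1) ^ (k + 1 - m) := by
        rw [intervalIntegral.integral_congr
          (g := fun y => ∑ m ∈ Finset.Icc 1 k,
            h ^ (r + m) / ((k - m).factorial : ℝ) * V m * (y - ai1) ^ (k - m))
          (fun y hy => ih y ((Set.uIcc_of_le hx ▸ hy).1))]
        rw [intervalIntegral.integral_finset_sum]
        · apply Finset.sum_congr rfl
          intro m hm
          have hm' : m ≤ k := (Finset.mem_Icc.mp hm).2
          have hint : (∫ y in ai1..x, (y - ai1) ^ (k - m))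
              = (x - ai1) ^ (k - m + 1) / ((k - m : ℕ) + 1) := by
            rw [intervalIntegral.integral_comp_sub_right (fun y => y ^ (k - m)) ai1]
            rw [integral_pow]
            simp
          rw [intervalIntegral.integral_const_mul, hint]
          have hkm : k + 1 - m = (k - m) + 1 := by omega
          rw [hkm, Nat.factorial_succ]
          have hne : ((k - m : ℕ) : ℝ) + 1 ≠ 0 := by positivity
          push_cast
          field_simp
        · intro m hm
          exact ((continuous_const.mul
            ((continuous_id.sub continuous_const).pow (k - m))).intervalIntegrable ai1 x)
      rw [← hsplit, h1, h2]
      rw [Finset.sum_Icc_succ_top (by omega : 1 ≤ k + 1)]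
      simp [add_comm]
  intro x hx1 hxb
  rw [iterInt_shift f hf a ai haai hf0 k]
  exact key k hk x hx1.le
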